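/- Let φ be a strictly positive order continuous linear functional on a Dedekind complete Banach lattice L whose norm satisfies ‖u‖ = φ(|u|) (an AL-space norm). If x^# : X → L is a linear operator on a lattice normed space X over L with φ ∘ x^# = 0 and x^# is B-linear for the Boolean algebra B of band projections of L, then x^# = 0. -/

import Mathlib

def IsBandProj {E : Type*} [Lattice E] [AddCommGroup E] [Module ℝ E]
    (b : E →ₗ[ℝ] E) : Prop :=
  (∀ e, b (b e) = b e) ∧ ∀ e, 0 ≤ e → 0 ≤ b e ∧ b e ≤ e

/-- If `φ` is a strictly positive order continuous functional on a Dedekind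
complete Banach lattice `L` with `‖u‖ = φ(|u|)`, and `x^# : X → L` is `B`-linear
with `φ ∘ x^# = 0`, then `x^# = 0`. -/
theorem blinear_functional_zero {L X : Type*}
    [NormedAddCommGroup L] [Lattice L] [IsOrderedAddMonoid L] [HasSolidNorm L]
    [NormedSpace ℝ L] [CompleteSpace L]
    [AddCommGroup X] [Module ℝ X]
    (φ : L →ₗ[ℝ] ℝ)
    (hsp : ∀ u : L, 0 < u → 0 < φ u)
    (hoc : ∀ (A : Set L) (a : L), A.Nonempty → DirectedOn (· ≥ ·) A →
      IsGLB A a → IsGLB (φ '' A) (φ a))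
    (hnorm : ∀ u : L, ‖u‖ = φ |u|)
    (hproj : ∀ u : L, ∃ b : L →ₗ[ℝ] L, IsBandProj b ∧ b u = u ⊔ 0)
    (ν : X → L) (Φ : (L →ₗ[ℝ] L) → (X →ₗ[ℝ] X))
    (hcompat : ∀ b : L →ₗ[ℝ] L, IsBandProj b → ∀ x, ν (Φ b x) = b (ν x))
    (T : X →ₗ[ℝ] L)
    (h0 : ∀ x, φ (T x) = 0)
    (hBlin : ∀ b : L →ₗ[ℝ] L, IsBandProj b → ∀ x, T (Φ b x) = b (T x)) :
    T = 0 := by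
  have key : ∀ x : X, (T x) ⊔ 0 = 0 := by
    intro x
    obtain ⟨b, hb, hbu⟩ := hproj (T x)
    have h1 : φ ((T x) ⊔ 0) = 0 := by
      rw [← hbu, ← hBlin b hb x, h0]
    by_contra hne
    have hpos : 0 < (T x) ⊔ 0 := lt_of_le_of_ne le_sup_right (fun h => hne h.symm)
    exact absurd h1 (ne_of_gt (hsp _ hpos))
  ext x
  have h1 : (T x) ⊔ 0 = 0 := key x
  have h2 : (-(T x)) ⊔ 0 = 0 := by
    have := key (-x)
    rwa [map_neg] at this
  have hle : T x ≤ 0 := sup_eq_right.mp h1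
  have hge : 0 ≤ T x := neg_nonpos.mp (sup_eq_right.mp h2)
  exact le_antisymm hle hge
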